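/- Let C ⊆ ℝ^d be a compact domain with nonempty interior and C² topological boundary ∂̄C. Assume that (i) for every x ∈ ∂̄C the set ∂̄C \ {x} is connected, and (ii) for all x, y ∈ ∂̄C, d(y − x, T_x ∂̄C) > 0 whenever x ≠ y. Then C is convex. -/

import Mathlib

open Set Metric ENNReal NNReal

noncomputable section

abbrev Euc (D : ℕ) := EuclideanSpace ℝ (Fin D)

/-- The medial axis of a set `S`: ambient points having at least two nearest points on `S`. -/
def medialAxis {D : ℕ} (S : Set (Euc D)) : Set (Euc D) :=
  {z | ∃ x ∈ S, ∃ y ∈ S, x ≠ y ∧ dist z x = Metric.infDist z S ∧ dist z y = Metric.infDist z S}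

/-- The reach of a set: the infimal distance from its medial axis to the set. -/
def reach {D : ℕ} (S : Set (Euc D)) : ℝ≥0∞ :=
  ⨅ z ∈ medialAxis S, EMetric.infEdist z S

/-- Geodesic (intrinsic) distance in `S`: infimum of lengths of continuous paths in `S`
joining `x` to `y` (`∞` if there is none). -/
def geodesicDist {D : ℕ} (S : Set (Euc D)) (x y : Euc D) : ℝ≥0∞ :=
  ⨅ (γ : ℝ → Euc D) (_ : ContinuousOn γ (Set.Icc 0 1))
    (_ : Set.MapsTo γ (Set.Icc 0 1) S) (_ : γ 0 = x) (_ : γ 1 = y),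
    eVariationOn γ (Set.Icc 0 1)

/-- The model space `ℝ^d × {0}^{D-d}` inside `ℝ^D`. -/
def fullModel (D d : ℕ) : Set (Euc D) := {x | ∀ i : Fin D, d ≤ (i : ℕ) → x i = 0}

/-- The model half-space `ℝ^{d-1} × ℝ₊ × {0}^{D-d}` inside `ℝ^D`. -/
def halfModel (D d : ℕ) : Set (Euc D) :=
  {x | (∀ i : Fin D, d ≤ (i : ℕ) → x i = 0) ∧ ∃ i : Fin D, (i : ℕ) + 1 = d ∧ 0 ≤ x i}

/-- `p` is a point of `M` around which `M` is C²-parametrized by the given model set. -/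
def IsChartedPoint {D : ℕ} (model : Set (Euc D)) (M : Set (Euc D)) (p : Euc D) : Prop :=
  ∃ (U V : Set (Euc D)) (Ψ Φ : Euc D → Euc D),
    IsOpen U ∧ IsOpen V ∧ (0 : Euc D) ∈ U ∧ p ∈ V ∧
    ContDiffOn ℝ 2 Ψ U ∧ ContDiffOn ℝ 2 Φ V ∧ Set.BijOn Ψ U V ∧
    (∀ x ∈ U, Φ (Ψ x) = x) ∧ Ψ 0 = p ∧ Ψ '' (U ∩ model) = M ∩ V

/-- `M ⊆ ℝ^D` is a `d`-dimensional C² submanifold with (possibly empty) boundary. -/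
def IsC2SubmanifoldWithBoundary {D : ℕ} (d : ℕ) (M : Set (Euc D)) : Prop :=
  IsClosed M ∧ ∀ p ∈ M, IsChartedPoint (fullModel D d) M p ∨ IsChartedPoint (halfModel D d) M p

/-- The (differential) boundary `∂M` of `M`: points carrying a half-space chart. -/
def boundaryOf {D : ℕ} (d : ℕ) (M : Set (Euc D)) : Set (Euc D) :=
  {p ∈ M | IsChartedPoint (halfModel D d) M p}

/-- The tangent space of `M` at `x`: the linear span of the tangent cone. -/
def tangentSpaceAt {D : ℕ} (M : Set (Euc D)) (x : Euc D) : Submodule ℝ (Euc D) :=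
  Submodule.span ℝ (tangentConeAt ℝ M x)

/-- The normal cone of `M` at `x`: the dual cone of the tangent cone. -/
def normalConeAt {D : ℕ} (M : Set (Euc D)) (x : Euc D) : Set (Euc D) :=
  {v | ∀ u ∈ tangentConeAt ℝ M x, (inner ℝ u v : ℝ) ≤ 0}

/-- Orthogonal projection onto a subspace, as a continuous linear map `E →L[ℝ] E`. -/
def projSub {D : ℕ} (T : Submodule ℝ (Euc D)) : Euc D →L[ℝ] Euc D :=
  T.subtypeL.comp (T.orthogonalProjectionOnto)

/-- Angle between two linear subspaces: operator norm of the difference of projections. -/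
def angleS {D : ℕ} (T T' : Submodule ℝ (Euc D)) : ℝ := ‖projSub T - projSub T'‖

/-- `η` is the unit outward-pointing normal of `M` at `p`:
the unit vector of `Nor(p,M) ∩ T_p M`. -/
def IsOutwardNormalAt {D : ℕ} (M : Set (Euc D)) (p η : Euc D) : Prop :=
  η ∈ normalConeAt M p ∧ η ∈ tangentSpaceAt M p ∧ ‖η‖ = 1


/-! ### Auxiliary lemmas -/

section AuxLemmas

open Filter Topology
open scoped RealInnerProductSpace

/-- The tangent cone to a (finite-dimensional, hence closed) submodule at `0` is the
submodule itself. -/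
lemma tangentCone_submodule {D : ℕ} (W : Submodule ℝ (Euc D)) :
    tangentConeAt ℝ (W : Set (Euc D)) 0 = (W : Set (Euc D)) := by
  apply Set.Subset.antisymm
  · intro v hv
    obtain ⟨c, f, hc, hf, hcf⟩ := mem_tangentConeAt_iff_exists_seq_norm_tendsto_atTop.1 hv
    have hclosed : IsClosed (W : Set (Euc D)) := W.closed_of_finiteDimensional
    refine hclosed.mem_of_tendsto hcf ?_
    filter_upwards [hf] with n hn
    have hn' : f n ∈ W := by simpa using hn
    exact W.smul_mem (c n) hn'
  · intro w hw
    refine mem_tangentConeAt_iff_exists_seq_norm_tendsto_atTop.2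
      ⟨fun n => (n : ℝ) + 1, fun n => ((n : ℝ) + 1)⁻¹ • w, ?_, ?_, ?_⟩
    swap
    · filter_upwards with n
      simpa using W.smul_mem ((n : ℝ) + 1)⁻¹ hw
    · have h1 : Tendsto (fun n : ℕ => (n : ℝ) + 1) atTop atTop :=
        tendsto_atTop_add_const_right _ 1 tendsto_natCast_atTop_atTop
      refine h1.congr (fun n => ?_)
      rw [Real.norm_eq_abs, abs_of_nonneg (by positivity)]
    · have : ∀ n : ℕ, ((n : ℝ) + 1) • (((n : ℝ) + 1)⁻¹ • w) = w := by
        intro n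
        rw [smul_smul, mul_inv_cancel₀ (by positivity), one_smul]
      simpa [this] using (tendsto_const_nhds : Tendsto (fun _ : ℕ => w) atTop (𝓝 w))

/-- At a point with a full-dimensional chart of dimension `d - 1`, the tangent space is a
hyperplane: it is the orthogonal complement of a unit normal vector. -/
lemma tangent_eq_hyperplane {d : ℕ} (hd : 0 < d) {M : Set (Euc d)} {x : Euc d}
    (hx : IsChartedPoint (fullModel d (d - 1)) M x) :
    ∃ η : Euc d, ‖η‖ = 1 ∧ ∀ v : Euc d, v ∈ tangentSpaceAt M x ↔ (inner ℝ η v : ℝ) = 0 := by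
  obtain ⟨U, V, Ψ, Φ, hU, hV, h0U, hxV, hΨ, hΦ, hbij, hinv, hΨ0, himg⟩ := hx
  set i0 : Fin d := ⟨d - 1, Nat.sub_lt hd one_pos⟩ with hi0
  have hsingle_ne : (EuclideanSpace.single i0 (1 : ℝ)) ≠ 0 := by
    intro h
    have h2 : (EuclideanSpace.single i0 (1 : ℝ)) i0 = 0 := by rw [h]; rfl
    simp [EuclideanSpace.single_apply] at h2
  set W : Submodule ℝ (Euc d) := (ℝ ∙ (EuclideanSpace.single i0 (1 : ℝ)))ᗮ with hWdef
  have hWset : (W : Set (Euc d)) = fullModel d (d - 1) := by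
    ext v
    constructor
    · intro hv i hi
      have hv0 : v i0 = 0 := by
        have h : (inner ℝ (EuclideanSpace.single i0 (1:ℝ)) v : ℝ) = 0 := (Submodule.mem_orthogonal_singleton_iff_inner_right).1 hv
        simpa [EuclideanSpace.inner_single_left] using h
      have hii : i = i0 := Fin.ext (le_antisymm (Nat.le_pred_of_lt i.isLt) hi)
      rw [hii]; exact hv0
    · intro hv
      refine (Submodule.mem_orthogonal_singleton_iff_inner_right).2 ?_
      have hv0 : v i0 = 0 := hv i0 (le_refl _)
      simp [EuclideanSpace.inner_single_left, hv0]
  have hWrank : Module.finrank ℝ W = d - 1 := by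
    have h1 : Module.finrank ℝ (ℝ ∙ (EuclideanSpace.single i0 (1 : ℝ))) = 1 :=
      finrank_span_singleton hsingle_ne
    have h2 := Submodule.finrank_add_finrank_orthogonal
      (K := (ℝ ∙ (EuclideanSpace.single i0 (1 : ℝ))))
    rw [h1, finrank_euclideanSpace_fin] at h2
    rw [hWdef]
    have h3 : Module.finrank ℝ ((ℝ ∙ (EuclideanSpace.single i0 (1 : ℝ)))ᗮ :
        Submodule ℝ (Euc d)) + 1 = d := by rw [Nat.add_comm]; exact h2
    exact Nat.eq_sub_of_add_eq h3
  -- derivatives of the chart maps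
  have hΨdiff : DifferentiableAt ℝ Ψ 0 :=
    (hΨ.differentiableOn (by norm_num)).differentiableAt (hU.mem_nhds h0U)
  have hΦdiff : DifferentiableAt ℝ Φ x :=
    (hΦ.differentiableOn (by norm_num)).differentiableAt (hV.mem_nhds hxV)
  set A := fderiv ℝ Ψ 0 with hA
  set B := fderiv ℝ Φ x with hB
  have hΦx : Φ x = 0 := by rw [← hΨ0]; exact hinv 0 h0U
  have hBA : ∀ v, B (A v) = v := by
    have hcomp : fderiv ℝ (Φ ∘ Ψ) 0 = B.comp A := by
      have h := fderiv_comp 0 (by rwa [hΨ0]) hΨdiff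
      rwa [hΨ0] at h
    have hid : (Φ ∘ Ψ) =ᶠ[𝓝 (0 : Euc d)] id := by
      filter_upwards [hU.mem_nhds h0U] with z hz
      exact hinv z hz
    have heq : fderiv ℝ (Φ ∘ Ψ) 0 = fderiv ℝ (id : Euc d → Euc d) 0 := hid.fderiv_eq
    rw [hcomp, fderiv_id] at heq
    intro v
    have := congrArg (fun L : Euc d →L[ℝ] Euc d => L v) heq
    simpa using this
  have hBsurj : Function.Surjective B := fun w => ⟨A w, hBA w⟩
  have hBinj : Function.Injective (B : Euc d →ₗ[ℝ] Euc d) :=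
    (LinearMap.injective_iff_surjective).2 (fun w => ⟨A w, hBA w⟩)
  have hBinj' : Function.Injective B := hBinj
  -- image identities
  have hΦimg : Φ '' (M ∩ V) = U ∩ fullModel d (d - 1) := by
    have hcon : ∀ z ∈ U ∩ fullModel d (d - 1), (Φ ∘ Ψ) z = id z := fun z hz => hinv z hz.1
    rw [← himg, ← Set.image_comp, Set.image_congr hcon, Set.image_id]
  -- tangent cone computations
  have hconeM : tangentConeAt ℝ M x = tangentConeAt ℝ (M ∩ V) x :=
    (tangentConeAt_inter_nhds (hV.mem_nhds hxV)).symm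
  have hup : ∀ v ∈ tangentConeAt ℝ M x, B v ∈ W := by
    intro v hv
    rw [hconeM] at hv
    have hmaps :=
      (hΦdiff.hasFDerivAt.hasFDerivWithinAt (s := M ∩ V)).mapsTo_tangent_cone hv
    rw [hΦimg, hΦx] at hmaps
    have h2 : B v ∈ tangentConeAt ℝ (fullModel d (d - 1)) 0 :=
      tangentConeAt_mono Set.inter_subset_right hmaps
    rw [← hWset, tangentCone_submodule] at h2
    exact h2
  have hdown : ∀ w ∈ W, A w ∈ tangentConeAt ℝ M x := by
    intro w hw
    have hw' : w ∈ tangentConeAt ℝ (U ∩ fullModel d (d - 1)) 0 := by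
      rw [Set.inter_comm, tangentConeAt_inter_nhds (hU.mem_nhds h0U), ← hWset,
        tangentCone_submodule]
      exact hw
    have hmaps :=
      (hΨdiff.hasFDerivAt.hasFDerivWithinAt (s := U ∩ fullModel d (d - 1))).mapsTo_tangent_cone hw'
    rw [himg, hΨ0] at hmaps
    rw [hconeM]
    exact hmaps
  -- the tangent space equals `comap B W`
  set T := tangentSpaceAt M x with hT
  have hTeq : T = Submodule.comap (B : Euc d →ₗ[ℝ] Euc d) W := by
    apply le_antisymm
    · rw [hT]
      rw [show tangentSpaceAt M x = Submodule.span ℝ (tangentConeAt ℝ M x) from rfl,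
        Submodule.span_le]
      intro v hv
      exact hup v hv
    · intro u hu
      have h1 : B u ∈ W := hu
      have h2 : A (B u) = u := hBinj' (by rw [hBA])
      have h3 : A (B u) ∈ tangentConeAt ℝ M x := hdown _ h1
      rw [h2] at h3
      exact Submodule.subset_span h3
  have hBlin_bij : Function.Bijective (B : Euc d →ₗ[ℝ] Euc d) := ⟨hBinj, hBsurj⟩
  have hTrank : Module.finrank ℝ T = d - 1 := by
    set e : Euc d ≃ₗ[ℝ] Euc d := LinearEquiv.ofBijective _ hBlin_bij with hedef
    have heq : T = Submodule.map (e.symm : Euc d →ₗ[ℝ] Euc d) W := by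
      rw [hTeq]; ext u
      simp only [Submodule.mem_comap, Submodule.mem_map]
      constructor
      · intro h
        exact ⟨B u, h, e.symm_apply_apply u⟩
      · rintro ⟨w, hw, rfl⟩
        show B ((e.symm : Euc d →ₗ[ℝ] Euc d) w) ∈ W
        have hBe : B ((e.symm : Euc d →ₗ[ℝ] Euc d) w) = e (e.symm w) := rfl
        rw [hBe, e.apply_symm_apply]
        exact hw
    rw [heq, LinearEquiv.finrank_map_eq, hWrank]
  have hTorth : Module.finrank ℝ (Tᗮ) = 1 := by
    have h2 := Submodule.finrank_add_finrank_orthogonal (K := T)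
    rw [hTrank, finrank_euclideanSpace_fin] at h2
    omega
  obtain ⟨η₀, hη₀T, hη₀ne⟩ : ∃ v ∈ Tᗮ, v ≠ 0 := by
    by_contra h
    push_neg at h
    have hbot : Tᗮ = ⊥ := by
      rw [Submodule.eq_bot_iff]
      exact fun v hv => by_contra fun hne => hne (by simpa using h v hv)
    rw [hbot, finrank_bot] at hTorth
    exact one_ne_zero hTorth.symm
  set η : Euc d := ‖η₀‖⁻¹ • η₀ with hηdef
  have hηnorm : ‖η‖ = 1 := norm_smul_inv_norm hη₀ne
  have hηne : η ≠ 0 := by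
    intro h; rw [h, norm_zero] at hηnorm; exact one_ne_zero hηnorm.symm
  have hηT : η ∈ Tᗮ := Submodule.smul_mem _ _ hη₀T
  have hspan : (ℝ ∙ η) = Tᗮ := by
    apply Submodule.eq_of_le_of_finrank_le
    · rw [Submodule.span_singleton_le_iff_mem]; exact hηT
    · rw [hTorth, finrank_span_singleton hηne]
  have hTη : T = (ℝ ∙ η)ᗮ := by
    rw [hspan, Submodule.orthogonal_orthogonal]
  refine ⟨η, hηnorm, fun v => ?_⟩
  rw [hTη]
  exact Submodule.mem_orthogonal_singleton_iff_inner_right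

lemma inner_sub_smul_helper {D : ℕ} (η p x : Euc D) (t : ℝ) (hη : ‖η‖ = 1) :
    (inner ℝ η ((p - t • η) - x) : ℝ) = (inner ℝ η (p - x) : ℝ) - t := by
  have h1 : (p - t • η) - x = (p - x) - t • η := by abel
  rw [h1, inner_sub_right, real_inner_smul_right, real_inner_self_eq_norm_mul_norm, hη]
  ring

lemma sub_smul_mem_ball {D : ℕ} (η p : Euc D) {t : ℝ} (ht : 0 < t) (hη : ‖η‖ = 1) {ε : ℝ}
    (htε : t < ε) : p - t • η ∈ Metric.ball p ε := by
  rw [Metric.mem_ball, dist_eq_norm]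
  have h1 : p - t • η - p = -(t • η) := by abel
  rw [h1, norm_neg, norm_smul, hη, mul_one, Real.norm_eq_abs, abs_of_pos ht]
  exact htε

end AuxLemmas

open Filter Topology

theorem stmt_11 {d : ℕ} (C : Set (Euc d)) (hC : IsCompact C)
    (hint : (interior C).Nonempty)
    (hbd : IsC2SubmanifoldWithBoundary (d - 1) (frontier C))
    (hnb : boundaryOf (d - 1) (frontier C) = ∅)
    (hconn : ∀ x ∈ frontier C, IsConnected (frontier C \ {x}))
    (hsep : ∀ x ∈ frontier C, ∀ y ∈ frontier C, x ≠ y →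
      0 < Metric.infDist (y - x) (tangentSpaceAt (frontier C) x : Set (Euc d))) :
    Convex ℝ C := by
  rcases Nat.eq_zero_or_pos d with hd0 | hd
  · subst hd0
    have hsub : C.Subsingleton := by
      intro u _ v _
      ext i
      exact absurd i.isLt (by omega)
    exact hsub.convex
  have hCcl : IsClosed C := hC.isClosed
  obtain ⟨c, hc⟩ := hint
  have hCne : C.Nonempty := ⟨c, interior_subset hc⟩
  have hfrsub : frontier C ⊆ C :=
    fun y hy => hCcl.closure_eq ▸ frontier_subset_closure hy
  -- every frontier point has a full chart
  have hchart : ∀ x ∈ frontier C, IsChartedPoint (fullModel d (d - 1)) (frontier C) x := by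
    intro x hx
    rcases hbd.2 x hx with h | h
    · exact h
    · exfalso
      have hmem : x ∈ boundaryOf (d - 1) (frontier C) := ⟨hx, h⟩
      rw [hnb] at hmem
      exact hmem
  -- the key supporting-hyperplane property
  have key : ∀ x ∈ frontier C, ∃ η : Euc d,
      (∀ y ∈ C, 0 ≤ (inner ℝ η (y - x) : ℝ)) ∧
      (∀ y ∈ interior C, 0 < (inner ℝ η (y - x) : ℝ)) := by
    intro x hx
    obtain ⟨η, hηnorm, hηchar⟩ := tangent_eq_hyperplane hd (hchart x hx)
    have hne : ∀ y ∈ frontier C, y ≠ x → (inner ℝ η (y - x) : ℝ) ≠ 0 := by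
      intro y hy hyx h0
      have hmem : y - x ∈ tangentSpaceAt (frontier C) x := (hηchar (y - x)).2 h0
      have hpos := hsep x hx y hy (Ne.symm hyx)
      rw [Metric.infDist_zero_of_mem hmem] at hpos
      exact lt_irrefl 0 hpos
    have hgcont : Continuous (fun y : Euc d => (inner ℝ η (y - x) : ℝ)) :=
      (innerSL ℝ η).continuous.comp (continuous_id.sub continuous_const)
    -- constant sign on the punctured frontier
    have hsign : (∀ y ∈ frontier C \ {x}, 0 < (inner ℝ η (y - x) : ℝ)) ∨
        (∀ y ∈ frontier C \ {x}, (inner ℝ η (y - x) : ℝ) < 0) := by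
      by_contra hcon
      push_neg at hcon
      obtain ⟨⟨y₁, hy₁, hy₁'⟩, ⟨y₂, hy₂, hy₂'⟩⟩ := hcon
      have hyx₁ : y₁ ≠ x := fun h => hy₁.2 (Set.mem_singleton_iff.2 h)
      have hyx₂ : y₂ ≠ x := fun h => hy₂.2 (Set.mem_singleton_iff.2 h)
      have h₁ : (inner ℝ η (y₁ - x) : ℝ) < 0 :=
        lt_of_le_of_ne hy₁' (hne y₁ hy₁.1 hyx₁)
      have h₂ : 0 < (inner ℝ η (y₂ - x) : ℝ) :=
        lt_of_le_of_ne hy₂' (Ne.symm (hne y₂ hy₂.1 hyx₂))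
      have himgpre : IsPreconnected
          ((fun y : Euc d => (inner ℝ η (y - x) : ℝ)) '' (frontier C \ {x})) :=
        ((hconn x hx).isPreconnected).image _ hgcont.continuousOn
      have hord := himgpre.ordConnected
      have h0mem : (0 : ℝ) ∈ (fun y : Euc d => (inner ℝ η (y - x) : ℝ)) '' (frontier C \ {x}) :=
        hord.out (Set.mem_image_of_mem _ hy₁) (Set.mem_image_of_mem _ hy₂)
          ⟨le_of_lt h₁, le_of_lt h₂⟩
      obtain ⟨y₀, hy₀, hy₀0⟩ := h0mem
      exact hne y₀ hy₀.1 (fun h => hy₀.2 (Set.mem_singleton_iff.2 h)) hy₀0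
    clear hηchar hne
    -- choose the correct orientation
    obtain ⟨η', hη'norm, hfr⟩ : ∃ η' : Euc d, ‖η'‖ = 1 ∧
        ∀ y ∈ frontier C, y ≠ x → 0 < (inner ℝ η' (y - x) : ℝ) := by
      rcases hsign with h | h
      · exact ⟨η, hηnorm, fun y hy hyx =>
          h y ⟨hy, fun hm => hyx (Set.mem_singleton_iff.1 hm)⟩⟩
      · refine ⟨-η, by simpa using hηnorm, fun y hy hyx => ?_⟩
        have h2 := h y ⟨hy, fun hm => hyx (Set.mem_singleton_iff.1 hm)⟩
        rw [inner_neg_left]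
        linarith
    clear hsign hηnorm hgcont
    have hgcont : Continuous (fun y : Euc d => (inner ℝ η' (y - x) : ℝ)) :=
      (innerSL ℝ η').continuous.comp (continuous_id.sub continuous_const)
    have hfr' : ∀ y ∈ frontier C, 0 ≤ (inner ℝ η' (y - x) : ℝ) := by
      intro y hy
      rcases eq_or_ne y x with rfl | hyx
      · simp
      · exact le_of_lt (hfr y hy hyx)
    have hC0 : ∀ y ∈ C, 0 ≤ (inner ℝ η' (y - x) : ℝ) := by
      obtain ⟨p0, hp0C, hp0min⟩ := hC.exists_isMinOn hCne hgcont.continuousOn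
      intro y hy
      have hmin : 0 ≤ (inner ℝ η' (p0 - x) : ℝ) := by
        by_contra hneg
        push_neg at hneg
        have hp0nf : p0 ∉ frontier C := fun hf => absurd (hfr' p0 hf) (not_le.2 hneg)
        have hp0int : p0 ∈ interior C := by
          by_contra hni
          exact hp0nf (hCcl.frontier_eq ▸ (⟨hp0C, hni⟩ : p0 ∈ C \ interior C))
        obtain ⟨ε, hε, hball⟩ := Metric.isOpen_iff.1 isOpen_interior p0 hp0int
        have hyC : p0 - (ε / 2) • η' ∈ C :=
          interior_subset (hball (sub_smul_mem_ball η' p0 (half_pos hε) hη'norm (by linarith)))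
        have hle : (inner ℝ η' (p0 - x) : ℝ) ≤ (inner ℝ η' ((p0 - (ε / 2) • η') - x) : ℝ) :=
          isMinOn_iff.1 hp0min _ hyC
        rw [inner_sub_smul_helper η' p0 x (ε / 2) hη'norm] at hle
        linarith
      calc (0:ℝ) ≤ (inner ℝ η' (p0 - x) : ℝ) := hmin
        _ ≤ (inner ℝ η' (y - x) : ℝ) := isMinOn_iff.1 hp0min _ hy
    have hint0 : ∀ y ∈ interior C, 0 < (inner ℝ η' (y - x) : ℝ) := by
      intro y hy
      rcases lt_or_eq_of_le (hC0 y (interior_subset hy)) with h | h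
      · exact h
      · exfalso
        obtain ⟨ε, hε, hball⟩ := Metric.isOpen_iff.1 isOpen_interior y hy
        have hyC : y - (ε / 2) • η' ∈ C :=
          interior_subset (hball (sub_smul_mem_ball η' y (half_pos hε) hη'norm (by linarith)))
        have hge := hC0 _ hyC
        rw [inner_sub_smul_helper η' y x (ε / 2) hη'norm, ← h] at hge
        linarith
    exact ⟨η', hC0, hint0⟩
  -- now prove convexity
  intro a ha b hb ta tb hta htb htab
  by_contra hp
  set p : Euc d := ta • a + tb • b with hpdef
  set γ : ℝ → Euc d := fun s => c + s • (p - c) with hγdef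
  have hγcont : Continuous γ := continuous_const.add (continuous_id.smul continuous_const)
  have hγ1 : γ 1 = p := by
    simp only [hγdef, one_smul]
    abel
  have hγ0 : γ 0 = c := by
    simp only [hγdef, zero_smul, add_zero]
  set T' : Set ℝ := {s ∈ Set.Icc (0:ℝ) 1 | γ s ∉ C} with hT'
  have h1T : (1:ℝ) ∈ T' := ⟨⟨zero_le_one, le_refl 1⟩, by rw [hγ1]; exact hp⟩
  have hT'ne : T'.Nonempty := ⟨1, h1T⟩
  have hbdd : BddBelow T' := ⟨0, fun s hs => hs.1.1⟩
  set s0 := sInf T' with hs0def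
  have hs0_0 : 0 ≤ s0 := le_csInf hT'ne (fun s hs => hs.1.1)
  have hs0_1 : s0 ≤ 1 := csInf_le hbdd h1T
  set q := γ s0 with hqdef
  have hqC : q ∈ C := by
    by_contra hqnC
    have hs0pos : 0 < s0 := by
      rcases lt_or_eq_of_le hs0_0 with h | h
      · exact h
      · exfalso
        apply hqnC
        rw [hqdef, ← h, hγ0]
        exact interior_subset hc
    have hopen : IsOpen (γ ⁻¹' Cᶜ) := hCcl.isOpen_compl.preimage hγcont
    have hs0mem : s0 ∈ γ ⁻¹' Cᶜ := hqnC
    obtain ⟨δ, hδ, hballs⟩ := Metric.isOpen_iff.1 hopen s0 hs0mem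
    set s1 := s0 - min δ s0 / 2 with hs1def
    have hminpos : 0 < min δ s0 := lt_min hδ hs0pos
    have hs1lt : s1 < s0 := by rw [hs1def]; linarith
    have hs1pos : 0 < s1 := by
      have hle : min δ s0 ≤ s0 := min_le_right _ _
      rw [hs1def]; linarith
    have hs1mem : s1 ∈ T' := by
      refine ⟨⟨le_of_lt hs1pos, le_trans (le_of_lt hs1lt) hs0_1⟩, ?_⟩
      have hmem : s1 ∈ Metric.ball s0 δ := by
        rw [Metric.mem_ball, Real.dist_eq, hs1def]
        have habs : |s0 - min δ s0 / 2 - s0| = min δ s0 / 2 := by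
          rw [show s0 - min δ s0 / 2 - s0 = -(min δ s0 / 2) by ring, abs_neg,
            abs_of_pos (by linarith)]
        rw [habs]
        have : min δ s0 ≤ δ := min_le_left _ _
        linarith
      exact hballs hmem
    have := csInf_le hbdd hs1mem
    rw [← hs0def] at this
    linarith
  have hqfr : q ∈ frontier C := by
    rw [frontier_eq_closure_inter_closure]
    refine ⟨subset_closure hqC, ?_⟩
    have hseq : ∀ n : ℕ, ∃ s ∈ T', s < s0 + 1/((n:ℝ)+1) := by
      intro n
      apply exists_lt_of_csInf_lt hT'ne
      rw [← hs0def]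
      have hpos : (0:ℝ) < 1/((n:ℝ)+1) := by positivity
      linarith
    choose f hf1 hf2 using hseq
    have hle : ∀ n, s0 ≤ f n := fun n => by
      have := csInf_le hbdd (hf1 n); rw [← hs0def] at this; exact this
    have hup : Filter.Tendsto (fun n : ℕ => s0 + 1/((n:ℝ)+1)) Filter.atTop (𝓝 s0) := by
      have h0 := tendsto_one_div_add_atTop_nhds_zero_nat (𝕜 := ℝ)
      simpa using (tendsto_const_nhds : Filter.Tendsto (fun _ : ℕ => s0) _ _).add h0
    have hftend : Filter.Tendsto f Filter.atTop (𝓝 s0) :=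
      tendsto_of_tendsto_of_tendsto_of_le_of_le tendsto_const_nhds hup hle
        (fun n => le_of_lt (hf2 n))
    have htend : Filter.Tendsto (γ ∘ f) Filter.atTop (𝓝 q) := (hγcont.tendsto s0).comp hftend
    exact mem_closure_of_tendsto htend (Filter.Eventually.of_forall (fun n => (hf1 n).2))
  obtain ⟨η, hη1, hη2⟩ := key q hqfr
  have hgc : 0 < (inner ℝ η (c - q) : ℝ) := hη2 c hc
  have hga : 0 ≤ (inner ℝ η (a - q) : ℝ) := hη1 a ha
  have hgb : 0 ≤ (inner ℝ η (b - q) : ℝ) := hη1 b hb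
  have hgp : 0 ≤ (inner ℝ η (p - q) : ℝ) := by
    have hqsmul : (ta + tb) • q = q := by rw [htab, one_smul]
    have hdecomp : p - q = ta • (a - q) + tb • (b - q) := by
      calc p - q = ta • a + tb • b - (ta + tb) • q := by rw [hqsmul, hpdef]
        _ = ta • (a - q) + tb • (b - q) := by
            rw [add_smul, smul_sub, smul_sub]; abel
    rw [hdecomp, inner_add_right, real_inner_smul_right, real_inner_smul_right]
    exact add_nonneg (mul_nonneg hta hga) (mul_nonneg htb hgb)
  have hs0lt1 : s0 < 1 := by
    rcases lt_or_eq_of_le hs0_1 with h | h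
    · exact h
    · exfalso
      apply hp
      have : q = p := by rw [hqdef, h, hγ1]
      rw [← this]
      exact hqC
  have hqd : q - q = (1 - s0) • (c - q) + s0 • (p - q) := by
    have hq' : q = c + s0 • (p - c) := by rw [hqdef]
    rw [hq']
    module
  have hfinal : (0:ℝ) < (inner ℝ η (q - q) : ℝ) := by
    rw [hqd, inner_add_right, real_inner_smul_right, real_inner_smul_right]
    have h1 : 0 < (1 - s0) * (inner ℝ η (c - q) : ℝ) := mul_pos (by linarith) hgc
    have h2 : 0 ≤ s0 * (inner ℝ η (p - q) : ℝ) := mul_nonneg hs0_0 hgp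
    linarith
  rw [sub_self, inner_zero_right] at hfinal
  exact lt_irrefl 0 hfinal
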